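/- arXiv:2001.03916 — 5 statements merged into one kernel-verified Lean document; each statement's English description precedes it below -/
import Mathlib

section
/- Let A be a finite abelian group and B a subgroup of index 2. The number of subsets S of A \ B with ⟨S⟩ a proper subgroup of A is at most 2^(|A|/4 + log₂|A|). -/
open Subgroup

/-- Every coatom of the subgroup lattice of a finite abelian group is the kernel of a
homomorphism to `ℂˣ`. -/
lemma coatom_is_ker {A : Type*} [CommGroup A] [Finite A] {M : Subgroup A} (hM : IsCoatom M) :
    ∃ φ : A →* ℂˣ, φ.ker = M := by
  have hnt : Nontrivial (A ⧸ M) := by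
    rw [← Finite.one_lt_card_iff_nontrivial, ← Subgroup.index_eq_card]
    have h0 : M.index ≠ 0 := Subgroup.index_ne_zero_of_finite
    have h1 : M.index ≠ 1 := by simpa [Subgroup.index_eq_one] using hM.1
    omega
  obtain ⟨a, ha⟩ := exists_ne (1 : A ⧸ M)
  haveI : NeZero ((Monoid.exponent (A ⧸ M) : ℂ)) :=
    ⟨Nat.cast_ne_zero.mpr Monoid.exponent_ne_zero_of_finite⟩
  obtain ⟨ψ, hψ⟩ := CommGroup.exists_apply_ne_one_of_hasEnoughRootsOfUnity (A ⧸ M) ℂ ha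
  refine ⟨ψ.comp (QuotientGroup.mk' M), ?_⟩
  have hle : M ≤ (ψ.comp (QuotientGroup.mk' M)).ker := by
    intro m hm
    simp [MonoidHom.mem_ker, (QuotientGroup.eq_one_iff m).mpr hm]
  have hne : (ψ.comp (QuotientGroup.mk' M)).ker ≠ ⊤ := by
    intro h
    obtain ⟨x, hx⟩ := QuotientGroup.mk'_surjective M a
    have hx1 : ψ (QuotientGroup.mk' M x) = 1 := by
      have : x ∈ (ψ.comp (QuotientGroup.mk' M)).ker := h ▸ Subgroup.mem_top x
      simpa [MonoidHom.mem_ker] using this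
    rw [hx] at hx1
    exact hψ hx1
  rcases hle.lt_or_eq with h | h
  · exact absurd (hM.2 _ h) hne
  · exact h.symm

/-- The number of coatoms of the subgroup lattice of a finite abelian group is at most the
cardinality of the group. -/
lemma card_coatoms_le (A : Type*) [CommGroup A] [Finite A] :
    Nat.card {M : Subgroup A // IsCoatom M} ≤ Nat.card A := by
  haveI : NeZero ((Monoid.exponent A : ℂ)) :=
    ⟨Nat.cast_ne_zero.mpr Monoid.exponent_ne_zero_of_finite⟩
  obtain ⟨e⟩ := CommGroup.monoidHom_mulEquiv_of_hasEnoughRootsOfUnity A ℂ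
  haveI : Finite (A →* ℂˣ) := Finite.of_equiv A e.toEquiv.symm
  have : ∀ M : {M : Subgroup A // IsCoatom M}, ∃ φ : A →* ℂˣ, φ.ker = M.1 :=
    fun M => coatom_is_ker M.2
  choose f hf using this
  have hinj : Function.Injective f := by
    intro M₁ M₂ h
    exact Subtype.ext (by rw [← hf M₁, ← hf M₂, h])
  calc Nat.card {M : Subgroup A // IsCoatom M} ≤ Nat.card (A →* ℂˣ) :=
        Nat.card_le_card_of_injective f hinj
    _ = Nat.card A := Nat.card_congr e.toEquiv

/-- For a coatom `M` and an index-2 subgroup `B`, the part of `M` outside `B` is small. -/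
lemma card_coatom_inter_compl {A : Type*} [CommGroup A] [Finite A] {B M : Subgroup A}
    (hB : B.index = 2) (hM : IsCoatom M) :
    4 * Nat.card ↥((M : Set A) ∩ (B : Set A)ᶜ) ≤ Nat.card A := by
  by_cases hMB : M ≤ B
  · have he : ((M : Set A) ∩ (B : Set A)ᶜ) = ∅ := by
      ext x
      simp only [Set.mem_inter_iff, Set.mem_compl_iff, SetLike.mem_coe, Set.mem_empty_iff_false,
        iff_false, not_and, not_not]
      exact fun hx => hMB hx
    have h0 : Nat.card ↥(∅ : Set A) = 0 := by simp [Nat.card_coe_set_eq]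
    rw [he, h0, Nat.mul_zero]
    exact Nat.zero_le _
  · -- relindex B M = 2
    have hdvd : B.relIndex M ∣ 2 := hB ▸ Subgroup.relIndex_dvd_index_of_normal B M
    have hrel : B.relIndex M = 2 := by
      rcases (Nat.dvd_prime Nat.prime_two).mp hdvd with h | h
      · exact absurd (Subgroup.relIndex_eq_one.mp h) hMB
      · exact h
    -- card (B ⊓ M) * 2 = card M
    have hcard : Nat.card (B.subgroupOf M) * 2 = Nat.card M := by
      have h := Subgroup.card_mul_index (B.subgroupOf M)
      have hr : (B.subgroupOf M).index = B.relIndex M := rfl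
      rwa [hr, hrel] at h
    have hBM : Nat.card (B.subgroupOf M) = Nat.card ↥(B ⊓ M : Subgroup A) := by
      rw [← Subgroup.inf_subgroupOf_right]
      exact Nat.card_congr (Subgroup.subgroupOfEquivOfLe inf_le_right).toEquiv
    -- card M * index M = card A, index M ≥ 2
    have hMA := Subgroup.card_mul_index M
    have hidx0 : M.index ≠ 0 := Subgroup.index_ne_zero_of_finite
    have hidx1 : M.index ≠ 1 := by simpa [Subgroup.index_eq_one] using hM.1
    -- set cardinalities
    have hdiff : (M : Set A) ∩ (B : Set A)ᶜ = (M : Set A) \ ((M : Set A) ∩ (B : Set A)) := by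
      ext x
      simp only [Set.mem_inter_iff, Set.mem_compl_iff, Set.mem_diff, SetLike.mem_coe]
      tauto
    have hfin : ((M : Set A) ∩ (B : Set A)).Finite := Set.toFinite _
    have hsub : ((M : Set A) ∩ (B : Set A)) ⊆ (M : Set A) := Set.inter_subset_left
    have e1 : ((M : Set A)).ncard = Nat.card M := by
      rw [← Nat.card_coe_set_eq]
      exact Nat.card_congr (Equiv.setCongr rfl)
    have e2 : ((M : Set A) ∩ (B : Set A)).ncard = Nat.card ↥(B ⊓ M : Subgroup A) := by
      rw [← Nat.card_coe_set_eq]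
      refine Nat.card_congr (Equiv.setCongr ?_)
      rw [Subgroup.coe_inf, Set.inter_comm]
    have hnc : Nat.card ↥((M : Set A) ∩ (B : Set A)ᶜ) =
        Nat.card M - Nat.card (B.subgroupOf M) := by
      rw [Nat.card_coe_set_eq, hdiff, Set.ncard_diff hsub, e1, e2, hBM]
    have h2m : 2 * Nat.card M ≤ Nat.card A := by
      calc 2 * Nat.card M ≤ M.index * Nat.card M :=
            Nat.mul_le_mul_right _ (by omega)
        _ = Nat.card A := by rw [mul_comm]; exact hMA
    rw [hnc]
    omega

/-- Let `A` be a finite abelian group and `B` a subgroup of index 2. The number of subsets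
`S` of `A \ B` with `⟨S⟩` a proper subgroup of `A` is at most `2 ^ (|A|/4 + log₂ |A|)`. -/
theorem stmt_5 (A : Type*) [CommGroup A] [Finite A] (B : Subgroup A) (hB : B.index = 2) :
    (Nat.card {S : Set A | S ⊆ (B : Set A)ᶜ ∧ Subgroup.closure S ≠ ⊤} : ℝ) ≤
      (2 : ℝ) ^ ((Nat.card A : ℝ) / 4 + Real.logb 2 (Nat.card A)) := by
  classical
  set n := Nat.card A with hn
  have hn0 : 0 < n := Nat.card_pos
  haveI : Finite (Subgroup A) :=
    Finite.of_injective (fun H : Subgroup A => (H : Set A)) SetLike.coe_injective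
  letI := Fintype.ofFinite A
  set C := {M : Subgroup A // IsCoatom M} with hC
  letI : Fintype C := Fintype.ofFinite C
  set 𝒮 := {S : Set A | S ⊆ (B : Set A)ᶜ ∧ Subgroup.closure S ≠ ⊤} with h𝒮
  set setM : C → Set A := fun M => (M.1 : Set A) ∩ (B : Set A)ᶜ with hsetM
  letI : ∀ M : C, Fintype ↥(setM M) := fun M => Fintype.ofFinite _
  -- choose a coatom above each S ∈ 𝒮
  have hchoose : ∀ S : 𝒮, ∃ M : C, S.1 ⊆ setM M := by
    rintro ⟨S, hS1, hS2⟩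
    obtain ⟨M, hM, hle⟩ := (eq_top_or_exists_le_coatom (Subgroup.closure S)).resolve_left hS2
    refine ⟨⟨M, hM⟩, fun x hx => ⟨hle (Subgroup.subset_closure hx), hS1 hx⟩⟩
  choose m hm using hchoose
  -- injection into a sigma type
  let f : 𝒮 → Σ M : C, Set ↥(setM M) := fun S => ⟨m S, Subtype.val ⁻¹' S.1⟩
  have hfinj : Function.Injective f := by
    intro S₁ S₂ h
    have himg := congrArg (fun p : Σ M : C, Set ↥(setM M) => Subtype.val '' p.2) h
    simp only [f] at himg
    have h₁ : Subtype.val '' (Subtype.val ⁻¹' S₁.1 : Set ↥(setM (m S₁))) = S₁.1 := by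
      rw [Set.image_preimage_eq_inter_range, Subtype.range_coe]
      exact Set.inter_eq_self_of_subset_left (hm S₁)
    have h₂ : Subtype.val '' (Subtype.val ⁻¹' S₂.1 : Set ↥(setM (m S₂))) = S₂.1 := by
      rw [Set.image_preimage_eq_inter_range, Subtype.range_coe]
      exact Set.inter_eq_self_of_subset_left (hm S₂)
    exact Subtype.ext (h₁ ▸ h₂ ▸ himg)
  -- counting
  have hcount : Nat.card 𝒮 ≤ Fintype.card C * 2 ^ (n / 4) := by
    have h1 : Nat.card 𝒮 ≤ Nat.card (Σ M : C, Set ↥(setM M)) :=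
      Nat.card_le_card_of_injective f hfinj
    have h2 : Nat.card (Σ M : C, Set ↥(setM M)) = ∑ M : C, 2 ^ Fintype.card ↥(setM M) := by
      rw [Nat.card_eq_fintype_card, Fintype.card_sigma]
      exact Finset.sum_congr rfl fun M _ => Fintype.card_set
    have h3 : ∀ M : C, 2 ^ Fintype.card ↥(setM M) ≤ 2 ^ (n / 4) := by
      intro M
      refine Nat.pow_le_pow_right (by norm_num) ?_
      have h4 : 4 * Nat.card ↥(setM M) ≤ n := card_coatom_inter_compl hB M.2
      have hc : Fintype.card ↥(setM M) = Nat.card ↥(setM M) := Nat.card_eq_fintype_card.symm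
      omega
    calc Nat.card 𝒮 ≤ ∑ M : C, 2 ^ Fintype.card ↥(setM M) := h2 ▸ h1
      _ ≤ ∑ _M : C, 2 ^ (n / 4) := Finset.sum_le_sum fun M _ => h3 M
      _ = Fintype.card C * 2 ^ (n / 4) := by
        rw [Finset.sum_const, Finset.card_univ, smul_eq_mul]
  have hCn : Fintype.card C ≤ n := by
    rw [← Nat.card_eq_fintype_card]
    exact card_coatoms_le A
  -- pass to the reals
  have hstep : (Nat.card 𝒮 : ℝ) ≤ (n : ℝ) * 2 ^ ((n : ℝ) / 4) := by
    calc (Nat.card 𝒮 : ℝ) ≤ ((Fintype.card C * 2 ^ (n / 4) : ℕ) : ℝ) := by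
          exact_mod_cast hcount
      _ = (Fintype.card C : ℝ) * (2 : ℝ) ^ ((n / 4 : ℕ) : ℝ) := by
          push_cast
          rw [Real.rpow_natCast]
      _ ≤ (n : ℝ) * 2 ^ ((n : ℝ) / 4) := by
          refine mul_le_mul ?_ ?_ (by positivity) (by positivity)
          · exact_mod_cast hCn
          · exact Real.rpow_le_rpow_of_exponent_le one_le_two
              ((Nat.cast_div_le).trans (by norm_num))
  have hrhs : (2 : ℝ) ^ ((n : ℝ) / 4 + Real.logb 2 n) = (n : ℝ) * 2 ^ ((n : ℝ) / 4) := by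
    rw [Real.rpow_add (by norm_num), Real.rpow_logb (by norm_num) (by norm_num)
      (by exact_mod_cast hn0), mul_comm]
  rw [hrhs]
  exact hstep
end

section
/- Let A be a finite group, B a subgroup of index 2, and H, K subgroups with 1 < H ≤ K < A and H ≤ B. The number of subsets S of A \ B such that S \ K is a union of right H-cosets is at most 2^(3|A|/8). -/
private lemma card_set_eq (α : Type*) [Finite α] : Nat.card (Set α) = 2 ^ Nat.card α := by
  classical
  have := Fintype.ofFinite α
  simp [Nat.card_eq_fintype_card, Fintype.card_set]

/-- Let `A` be a finite group, `B` a subgroup of index 2, and `H`, `K` subgroups with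
`1 < H ≤ K < A` and `H ≤ B`. The number of subsets `S` of `A \ B` such that `S \ K` is a
union of right `H`-cosets is at most `2 ^ (3|A|/8)`. -/
theorem stmt_7 (A : Type*) [Group A] [Finite A] (B H K : Subgroup A) (hB : B.index = 2)
    (hH : H ≠ ⊥) (hHK : H ≤ K) (hK : K ≠ ⊤) (hHB : H ≤ B) :
    (Nat.card {S : Set A | S ⊆ (B : Set A)ᶜ ∧
        ∀ s ∈ S \ (K : Set A), ∀ h ∈ H, s * h ∈ S} : ℝ) ≤
      (2 : ℝ) ^ (3 * (Nat.card A : ℝ) / 8) := by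
  classical
  obtain ⟨h₀, h₀H, h₀ne⟩ : ∃ x ∈ H, x ≠ (1 : A) := by
    rcases H.bot_or_exists_ne_one with h | h
    · exact absurd h hH
    · exact h
  set n := Nat.card A with hn
  set X : Set A := (B : Set A)ᶜ with hX
  -- X \ K is closed under right multiplication by H
  have hXcl : ∀ s ∈ X \ (K : Set A), ∀ h ∈ H, s * h ∈ X \ (K : Set A) := by
    rintro s ⟨hsB, hsK⟩ h hh
    refine ⟨fun hmem => hsB ?_, fun hmem => hsK ?_⟩
    · have : s * h * h⁻¹ ∈ B := B.mul_mem (by exact hmem) (B.inv_mem (hHB hh))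
      simpa using this
    · have : s * h * h⁻¹ ∈ K := K.mul_mem hmem (K.inv_mem (hHK hh))
      simpa using this
  set Q' : Set (A ⧸ H) := (QuotientGroup.mk : A → A ⧸ H) '' (X \ (K : Set A)) with hQ'
  set 𝒮 := {S : Set A | S ⊆ (B : Set A)ᶜ ∧
        ∀ s ∈ S \ (K : Set A), ∀ h ∈ H, s * h ∈ S} with h𝒮
  -- the injection
  set Φ : 𝒮 → Set ↥(X ∩ (K : Set A)) × Set ↥Q' :=
    fun S => (Subtype.val ⁻¹' S.1,
      Subtype.val ⁻¹' ((QuotientGroup.mk : A → A ⧸ H) '' (S.1 \ (K : Set A)))) with hΦ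
  have key : ∀ (S : 𝒮) (s : A), s ∈ X \ (K : Set A) →
      (s ∈ S.1 ↔ (QuotientGroup.mk s : A ⧸ H) ∈
        (QuotientGroup.mk : A → A ⧸ H) '' (S.1 \ (K : Set A))) := by
    rintro ⟨S, hSX, hScl⟩ s ⟨hsB, hsK⟩
    constructor
    · intro hs; exact ⟨s, ⟨hs, hsK⟩, rfl⟩
    · rintro ⟨s', hs', heq⟩
      have hmem : s'⁻¹ * s ∈ H := (QuotientGroup.eq).mp heq
      have := hScl s' hs' _ hmem
      simpa [mul_assoc] using this
  have hsub : ∀ S : 𝒮, (QuotientGroup.mk : A → A ⧸ H) '' (S.1 \ (K : Set A)) ⊆ Q' := by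
    rintro ⟨S, hSX, hScl⟩
    exact Set.image_mono (Set.diff_subset_diff_left hSX)
  have hΦinj : Function.Injective Φ := by
    rintro S T hST
    have h1 := congrArg Prod.fst hST
    have h2 := congrArg Prod.snd hST
    simp only [hΦ] at h1 h2
    have himg : (QuotientGroup.mk : A → A ⧸ H) '' (S.1 \ (K : Set A)) =
        (QuotientGroup.mk : A → A ⧸ H) '' (T.1 \ (K : Set A)) := by
      ext y
      constructor
      · intro hy
        exact Set.ext_iff.mp h2 ⟨y, hsub S hy⟩ |>.mp hy
      · intro hy
        exact Set.ext_iff.mp h2 ⟨y, hsub T hy⟩ |>.mpr hy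
    apply Subtype.ext
    ext s
    by_cases hsX : s ∈ X
    · by_cases hsK : s ∈ (K : Set A)
      · exact Set.ext_iff.mp h1 ⟨s, hsX, hsK⟩
      · rw [key S s ⟨hsX, hsK⟩, key T s ⟨hsX, hsK⟩, himg]
    · constructor
      · intro hs; exact absurd (S.2.1 hs) hsX
      · intro hs; exact absurd (T.2.1 hs) hsX
  -- cardinalities
  set a := (X ∩ (K : Set A)).ncard with ha
  set b := (X \ (K : Set A)).ncard with hb
  set c := Q'.ncard with hc
  have hcard : Nat.card 𝒮 ≤ 2 ^ (a + c) := by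
    have e1 : Nat.card ↥(X ∩ (K : Set A)) = a := Nat.card_coe_set_eq _
    have e2 : Nat.card ↥Q' = c := Nat.card_coe_set_eq _
    have := Nat.card_le_card_of_injective Φ hΦinj
    rwa [Nat.card_prod, card_set_eq, card_set_eq, e1, e2, ← pow_add] at this
  -- arithmetic facts
  have hab : 2 * (a + b) = n := by
    have h1 : a + b = X.ncard := Set.ncard_inter_add_ncard_diff_eq_ncard X (K : Set A)
    have h2 : (B : Set A).ncard + X.ncard = n := Set.ncard_add_ncard_compl (B : Set A)
    have h3 : (B : Set A).ncard * 2 = n := by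
      have h4 := B.card_mul_index
      rw [hB] at h4
      rw [← Nat.card_coe_set_eq]
      exact h4
    omega
  have ha4 : 4 * a ≤ n := by
    by_cases hKB : (K : Set A) ⊆ (B : Set A)
    · have he : X ∩ (K : Set A) = ∅ := by
        ext x
        simp only [Set.mem_inter_iff, Set.mem_empty_iff_false, iff_false, not_and, hX,
          Set.mem_compl_iff]
        intro hx hk
        exact hx (hKB hk)
      have : a = 0 := by rw [ha, he, Set.ncard_empty]
      omega
    · obtain ⟨k, hkK, hkB⟩ := Set.not_subset.mp hKB
      have hinj : Nat.card ↥(X ∩ (K : Set A)) ≤ Nat.card ↥((K : Set A) ∩ (B : Set A)) := by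
        refine Nat.card_le_card_of_injective
          (fun x => ⟨k * x.1, K.mul_mem hkK x.2.2, ?_⟩) ?_
        · rw [SetLike.mem_coe, Subgroup.mul_mem_iff_of_index_two hB]
          have hx : (x : A) ∉ (B : Set A) := x.2.1
          simp only [SetLike.mem_coe] at hkB hx ⊢
          tauto
        · intro x y hxy
          have := congrArg Subtype.val hxy
          exact Subtype.ext (mul_left_cancel this)
      rw [Nat.card_coe_set_eq, Nat.card_coe_set_eq] at hinj
      have h2 : ((K : Set A) ∩ (B : Set A)).ncard + ((K : Set A) \ (B : Set A)).ncard =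
          (K : Set A).ncard := Set.ncard_inter_add_ncard_diff_eq_ncard _ _
      have h3 : X ∩ (K : Set A) = (K : Set A) \ (B : Set A) := by
        ext x
        simp only [hX, Set.mem_inter_iff, Set.mem_compl_iff, Set.mem_diff]
        tauto
      have h4 : (K : Set A).ncard * K.index = n := by
        rw [← Nat.card_coe_set_eq]
        exact K.card_mul_index
      have h5 : 2 ≤ K.index := Subgroup.one_lt_index_of_ne_top hK
      have h6 : (K : Set A).ncard * 2 ≤ n := h4 ▸ Nat.mul_le_mul_left _ h5
      have h7 : a = ((K : Set A) \ (B : Set A)).ncard := by rw [ha, h3]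
      omega
  have hcb : 2 * c ≤ b := by
    have hout : ∀ y : A ⧸ H, y ∈ Q' → Quotient.out y ∈ X \ (K : Set A) := by
      rintro y ⟨s, hs, rfl⟩
      have heq : (QuotientGroup.mk (Quotient.out (QuotientGroup.mk s : A ⧸ H)) : A ⧸ H) =
          QuotientGroup.mk s := QuotientGroup.out_eq' _
      have hmem : s⁻¹ * Quotient.out (QuotientGroup.mk s : A ⧸ H) ∈ H :=
        (QuotientGroup.eq).mp heq.symm
      have := hXcl s hs _ hmem
      simpa [mul_assoc] using this
    have hinj : Nat.card (↥Q' × Bool) ≤ Nat.card ↥(X \ (K : Set A)) := by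
      refine Nat.card_le_card_of_injective
        (fun p => if p.2 then ⟨Quotient.out p.1.1, hout _ p.1.2⟩
          else ⟨Quotient.out p.1.1 * h₀, hXcl _ (hout _ p.1.2) h₀ h₀H⟩) ?_
      rintro ⟨⟨y, hy⟩, by1⟩ ⟨⟨z, hz⟩, by2⟩ hpq
      have hval := congrArg Subtype.val hpq
      cases by1 <;> cases by2 <;> simp only [if_true, if_false, Bool.false_eq_true,
        reduceIte] at hval ⊢
      · -- out y * h₀ = out z * h₀
        have : Quotient.out y = Quotient.out z := mul_right_cancel hval
        have : y = z := by
          rw [← QuotientGroup.out_eq' y, ← QuotientGroup.out_eq' z, this]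
        simp [this]
      · -- out y * h₀ = out z
        exfalso
        have hyz : y = z := by
          rw [← QuotientGroup.out_eq' y, ← QuotientGroup.out_eq' z, ← hval,
            QuotientGroup.mk_mul_of_mem _ h₀H]
        rw [hyz] at hval
        exact h₀ne (by simpa using mul_left_cancel (hval.trans (mul_one _).symm))
      · -- out y = out z * h₀
        exfalso
        have hyz : y = z := by
          rw [← QuotientGroup.out_eq' y, ← QuotientGroup.out_eq' z, hval,
            QuotientGroup.mk_mul_of_mem _ h₀H]
        rw [hyz] at hval
        exact h₀ne (by simpa using (mul_left_cancel (hval.symm.trans (mul_one _).symm)))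
      · have : y = z := by
          rw [← QuotientGroup.out_eq' y, ← QuotientGroup.out_eq' z, hval]
        simp [this]
    rw [Nat.card_prod, Nat.card_coe_set_eq, Nat.card_coe_set_eq, Nat.card_eq_fintype_card,
      Fintype.card_bool] at hinj
    omega
  have harith : 8 * (a + c) ≤ 3 * n := by omega
  -- finish
  calc (Nat.card 𝒮 : ℝ) ≤ ((2 : ℕ) ^ (a + c) : ℕ) := by exact_mod_cast hcard
  _ = (2 : ℝ) ^ ((a + c : ℕ) : ℝ) := by
      rw [Real.rpow_natCast]
      push_cast
      ring
  _ ≤ (2 : ℝ) ^ (3 * (n : ℝ) / 8) := by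
      apply Real.rpow_le_rpow_of_exponent_le one_le_two
      rw [le_div_iff₀ (by norm_num : (0:ℝ) < 8)]
      norm_cast
      omega
end

section
/- Let A be a finite abelian group of even order and B a subgroup of index 2. The number of inverse-closed subsets S of A \ B equals 2^(|A|/4 + |A₂ \ B|/2), where A₂ = {a ∈ A : a² = 1}. -/
/-- The setoid whose classes are the orbits of an involution. -/
def involSetoid {α : Type*} (f : α → α) (hf : Function.Involutive f) : Setoid α where
  r x y := y = x ∨ y = f x
  iseqv := by
    refine ⟨fun x => Or.inl rfl, ?_, ?_⟩
    · rintro x y (rfl | rfl)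
      · exact Or.inl rfl
      · exact Or.inr (hf x).symm
    · rintro x y z (rfl | rfl) (rfl | rfl)
      · exact Or.inl rfl
      · exact Or.inr rfl
      · exact Or.inr rfl
      · exact Or.inl (hf x)

theorem involSetoid_count {α : Type*} [Finite α] (f : α → α) (hf : Function.Involutive f) :
    2 * Nat.card (Quotient (involSetoid f hf)) =
      Nat.card α + Nat.card {x : α // f x = x} := by
  classical
  letI s : Setoid α := involSetoid f hf
  have := Fintype.ofFinite α
  have hmk : ∀ x a : α, Quotient.mk s x = Quotient.mk s a ↔ (x = a ∨ x = f a) := by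
    intro x a
    constructor
    · intro h
      rcases Quotient.exact h with (h | h)
      · exact Or.inl h.symm
      · right; rw [h, hf]
    · rintro (rfl | rfl)
      · rfl
      · exact (Quotient.sound (Or.inr rfl)).symm
  have key : ∀ q : Quotient s, Nat.card {x : α // Quotient.mk s x = q} +
      Nat.card {x : α // f x = x ∧ Quotient.mk s x = q} = 2 := by
    intro q
    induction q using Quotient.ind with
    | _ a =>
      by_cases h : f a = a
      · have h1 : {x : α | Quotient.mk s x = Quotient.mk s a} = {a} := by
          ext x; simp [hmk, h]
        have h2 : {x : α | f x = x ∧ Quotient.mk s x = Quotient.mk s a} = {a} := by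
          ext x
          simp only [Set.mem_setOf_eq, hmk, h, or_self, Set.mem_singleton_iff]
          constructor
          · rintro ⟨-, rfl⟩; rfl
          · rintro rfl; exact ⟨h, rfl⟩
        have e1 : Nat.card {x : α // Quotient.mk s x = Quotient.mk s a} = 1 := by
          rw [show {x : α // Quotient.mk s x = Quotient.mk s a} =
            ↥{x : α | Quotient.mk s x = Quotient.mk s a} from rfl,
            Nat.card_coe_set_eq, h1, Set.ncard_singleton]
        have e2 : Nat.card {x : α // f x = x ∧ Quotient.mk s x = Quotient.mk s a} = 1 := by
          rw [show {x : α // f x = x ∧ Quotient.mk s x = Quotient.mk s a} =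
            ↥{x : α | f x = x ∧ Quotient.mk s x = Quotient.mk s a} from rfl,
            Nat.card_coe_set_eq, h2, Set.ncard_singleton]
        rw [e1, e2]
      · have h1 : {x : α | Quotient.mk s x = Quotient.mk s a} = {a, f a} := by
          ext x; simp [hmk]
        have h2 : {x : α | f x = x ∧ Quotient.mk s x = Quotient.mk s a} = ∅ := by
          ext x
          simp only [Set.mem_setOf_eq, hmk, Set.mem_empty_iff_false, iff_false, not_and]
          rintro hx (rfl | rfl)
          · exact h hx
          · rw [hf] at hx; exact h hx.symm
        have e1 : Nat.card {x : α // Quotient.mk s x = Quotient.mk s a} = 2 := by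
          rw [show {x : α // Quotient.mk s x = Quotient.mk s a} =
            ↥{x : α | Quotient.mk s x = Quotient.mk s a} from rfl,
            Nat.card_coe_set_eq, h1, Set.ncard_pair (Ne.symm h)]
        have e2 : Nat.card {x : α // f x = x ∧ Quotient.mk s x = Quotient.mk s a} = 0 := by
          rw [show {x : α // f x = x ∧ Quotient.mk s x = Quotient.mk s a} =
            ↥{x : α | f x = x ∧ Quotient.mk s x = Quotient.mk s a} from rfl,
            Nat.card_coe_set_eq, h2, Set.ncard_empty]
        rw [e1, e2]
  have hα : Nat.card α = ∑ q : Quotient s, Nat.card {x : α // Quotient.mk s x = q} := by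
    rw [Nat.card_congr (Equiv.sigmaFiberEquiv (Quotient.mk s)).symm,
      Nat.card_eq_fintype_card, Fintype.card_sigma]
    exact Finset.sum_congr rfl fun q _ => (Nat.card_eq_fintype_card).symm
  have hfix : Nat.card {x : α // f x = x} =
      ∑ q : Quotient s, Nat.card {x : α // f x = x ∧ Quotient.mk s x = q} := by
    rw [Nat.card_congr (Equiv.sigmaFiberEquiv
      (fun y : {x : α // f x = x} => Quotient.mk s (y : α))).symm,
      Nat.card_eq_fintype_card, Fintype.card_sigma]
    refine Finset.sum_congr rfl fun q _ => ?_
    rw [Nat.card_eq_fintype_card]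
    exact Fintype.card_congr (Equiv.subtypeSubtypeEquivSubtypeInter (fun x => f x = x) (fun x => Quotient.mk s x = q))
  rw [hα, hfix, ← Finset.sum_add_distrib]
  rw [Finset.sum_congr rfl fun q _ => key q, Finset.sum_const, Finset.card_univ,
    Nat.card_eq_fintype_card, smul_eq_mul, mul_comm]

/-- Let `A` be a finite abelian group of even order and `B` a subgroup of index 2.
The number of inverse-closed subsets `S` of `A \ B` equals
`2 ^ (|A|/4 + |A₂ \ B|/2)`, where `A₂ = {a ∈ A : a² = 1}`. -/
theorem stmt_8 (A : Type*) [CommGroup A] [Finite A] (B : Subgroup A) (hB : B.index = 2)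
    (heven : Even (Nat.card A)) :
    (Nat.card {S : Set A | S ⊆ (B : Set A)ᶜ ∧ S⁻¹ = S} : ℝ) =
      (2 : ℝ) ^ ((Nat.card A : ℝ) / 4 +
        (({a : A | a ^ 2 = 1} \ (B : Set A)).ncard : ℝ) / 2) := by
  classical
  set C : Set A := (B : Set A)ᶜ with hC
  have hCmem : ∀ a : A, a ∈ C ↔ a ∉ B := fun a => Iff.rfl
  have hCinv : ∀ a : A, a ∈ C → a⁻¹ ∈ C := by
    intro a ha hmem
    exact ha ((Subgroup.inv_mem_iff B).mp hmem)
  let f : C → C := fun x => ⟨(x : A)⁻¹, hCinv _ x.2⟩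
  have hf : Function.Involutive f := by
    intro x; apply Subtype.ext; simp [f]
  letI s : Setoid ↥C := involSetoid f hf
  -- the equivalence between subsets of the quotient and inverse-closed subsets of C
  have hrel : ∀ (a : A) (h : a ∈ C) (h' : a⁻¹ ∈ C),
      Quotient.mk s ⟨a⁻¹, h'⟩ = Quotient.mk s ⟨a, h⟩ :=
    fun a h h' => Quotient.sound (Or.inr (Subtype.ext (inv_inv a).symm))
  let E : Set (Quotient s) ≃ {S : Set A | S ⊆ (B : Set A)ᶜ ∧ S⁻¹ = S} :=
    { toFun := fun U => ⟨{a : A | ∃ h : a ∈ C, Quotient.mk s ⟨a, h⟩ ∈ U},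
        ⟨fun a ha => ha.1, by
          ext a
          simp only [Set.mem_inv, Set.mem_setOf_eq]
          constructor
          · rintro ⟨h', hU⟩
            have h : a ∈ C := by simpa using hCinv _ h'
            exact ⟨h, by rwa [hrel a h h'] at hU⟩
          · rintro ⟨h, hU⟩
            exact ⟨hCinv _ h, by rwa [hrel a h (hCinv _ h)]⟩⟩⟩,
      invFun := fun S => Quotient.mk s '' {x : ↥C | (x : A) ∈ (S : Set A)},
      left_inv := by
        intro U
        ext q
        induction q using Quotient.ind with
        | _ x =>
          simp only [Set.mem_image, Set.mem_setOf_eq]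
          constructor
          · rintro ⟨y, ⟨h, hU⟩, hq⟩
            rwa [show Quotient.mk s ⟨(y : A), h⟩ = Quotient.mk s x from by
              rw [Subtype.coe_eta]; exact hq]
              at hU
          · intro hU
            exact ⟨x, ⟨x.2, by rwa [Subtype.coe_eta]⟩, rfl⟩
      right_inv := by
        rintro ⟨S, hsub, hinv⟩
        apply Subtype.ext
        ext a
        simp only [Set.mem_setOf_eq, Set.mem_image]
        constructor
        · rintro ⟨h, y, hy, hq⟩
          rcases Quotient.exact hq with (h1 | h1)
          · have : a = (y : A) := congrArg Subtype.val h1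
            rwa [this]
          · have : a = (y : A)⁻¹ := congrArg Subtype.val h1
            rw [this, ← hinv]
            simpa using hy
        · intro ha
          exact ⟨hsub ha, ⟨a, hsub ha⟩, ha, rfl⟩ }
  -- cardinality computations
  have hcount : Nat.card {S : Set A | S ⊆ (B : Set A)ᶜ ∧ S⁻¹ = S} =
      2 ^ Nat.card (Quotient s) := by
    rw [← Nat.card_congr E]
    have := Fintype.ofFinite (Quotient s)
    rw [Nat.card_eq_fintype_card, Nat.card_eq_fintype_card, Fintype.card_set]
  have hmain : 2 * Nat.card (Quotient s) = Nat.card ↥C + Nat.card {x : ↥C // f x = x} :=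
    involSetoid_count f hf
  -- fixed points are A₂ \ B
  have hfixcard : Nat.card {x : ↥C // f x = x} = ({a : A | a ^ 2 = 1} \ (B : Set A)).ncard := by
    rw [← Nat.card_coe_set_eq]
    refine Nat.card_congr ?_
    refine ⟨fun x => ⟨(x : ↥C), ?_, ?_⟩, fun y => ⟨⟨y, y.2.2⟩, ?_⟩, ?_, ?_⟩
    · have := congrArg Subtype.val x.2
      simp only [f] at this
      simp only [Set.mem_setOf_eq]
      rw [pow_two, ← eq_inv_iff_mul_eq_one]
      exact this.symm
    · exact (x : ↥C).2
    · apply Subtype.ext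
      simp only [f]
      rw [inv_eq_iff_mul_eq_one, ← pow_two]
      exact y.2.1
    · intro x; apply Subtype.ext; rfl
    · intro y; rfl
  -- |C| = |A| / 2
  have hBcard : 2 * Nat.card B = Nat.card A := by
    rw [← B.index_mul_card, hB]
  have hCcard : 2 * Nat.card ↥C = Nat.card A := by
    have h1 : (B : Set A).ncard + C.ncard = Nat.card A := Set.ncard_add_ncard_compl _
    have h2 : (B : Set A).ncard = Nat.card B := by
      rw [← Nat.card_coe_set_eq]; exact Nat.card_congr (Equiv.refl _)
    have h3 : C.ncard = Nat.card ↥C := (Nat.card_coe_set_eq _).symm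
    omega
  -- arithmetic wrap-up
  rw [hcount]
  have hexp : ((Nat.card A : ℝ) / 4 +
      (({a : A | a ^ 2 = 1} \ (B : Set A)).ncard : ℝ) / 2) = (Nat.card (Quotient s) : ℝ) := by
    have h4 : 4 * Nat.card (Quotient s) =
        Nat.card A + 2 * ({a : A | a ^ 2 = 1} \ (B : Set A)).ncard := by omega
    have := congrArg (fun n : ℕ => (n : ℝ)) h4
    push_cast at this
    linarith
  rw [hexp, Real.rpow_natCast]
  push_cast
  ring
end

section
/- Let A = ⟨x⟩ × ⟨y₁⟩ × ⋯ × ⟨y_ℓ⟩ with x of order 4 and each yᵢ of order 2 (ℓ ≥ 1), and let B = ⟨x², y₁, …, y_ℓ⟩. Then there exists a non-identity automorphism α of A, distinct from inversion, such that every element a of A \ B satisfies a^α = a or a^α = a⁻¹. -/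
private lemma stmt10_key : ∀ u v : ZMod 2,
    (2 * ((u + v).val : ZMod 4)) = 2 * (u.val : ZMod 4) + 2 * (v.val : ZMod 4) := by
  decide

/-- Let `A = ⟨x⟩ × ⟨y₁⟩ × ⋯ × ⟨y_ℓ⟩` with `x` of order 4 and each `yᵢ` of order 2
(`ℓ ≥ 1`), and let `B = ⟨x², y₁, …, y_ℓ⟩`. Then there exists a non-identity automorphism
`α` of `A`, distinct from inversion, such that every `a ∈ A \ B` satisfies
`a^α = a` or `a^α = a⁻¹` (written additively). -/
theorem stmt_10 (ℓ : ℕ) (hℓ : 1 ≤ ℓ)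
    (B : AddSubgroup (ZMod 4 × (Fin ℓ → ZMod 2)))
    (hB : B = AddSubgroup.closure
      ({((2 : ZMod 4), (0 : Fin ℓ → ZMod 2))} ∪ {a | a.1 = 0})) :
    ∃ α : (ZMod 4 × (Fin ℓ → ZMod 2)) ≃+ (ZMod 4 × (Fin ℓ → ZMod 2)),
      (∃ a, α a ≠ a) ∧ (∃ a, α a ≠ -a) ∧
      ∀ a, a ∉ B → (α a = a ∨ α a = -a) := by
  haveI : NeZero ℓ := ⟨by omega⟩
  refine ⟨{ toFun := fun a => (-a.1 + 2 * ((a.2 0).val : ZMod 4), a.2),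
            invFun := fun a => (-a.1 + 2 * ((a.2 0).val : ZMod 4), a.2),
            left_inv := ?_, right_inv := ?_, map_add' := ?_ }, ?_, ?_, ?_⟩
  · intro a; ext <;> simp
  · intro a; ext <;> simp
  · intro a b
    refine Prod.ext ?_ rfl
    simp only [Prod.fst_add, Prod.snd_add, Pi.add_apply, stmt10_key]
    ring
  · refine ⟨(1, 0), ?_⟩
    simp only [AddEquiv.coe_mk, Equiv.coe_fn_mk, Prod.mk.injEq, Ne, Pi.zero_apply]
    intro h
    have := h.1
    simp at this
    exact absurd this (by decide)
  · refine ⟨(0, fun _ => 1), ?_⟩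
    intro h
    have h1 : ((2 : ZMod 4)) = 0 := by
      have h' := congrArg Prod.fst h
      simp at h'
      rwa [show (2 * ZMod.cast (1 : ZMod 2) : ZMod 4) = 2 by decide] at h'
    exact (by decide : (2:ZMod 4) ≠ 0) h1
  · intro a ha
    have hodd : a.1 = 1 ∨ a.1 = 3 := by
      by_contra h
      push_neg at h
      have h02 : a.1 = 0 ∨ a.1 = 2 :=
        (show ∀ c : ZMod 4, c ≠ 1 → c ≠ 3 → c = 0 ∨ c = 2 by decide) a.1 h.1 h.2
      apply ha
      subst hB
      rcases h02 with h0 | h2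
      · exact AddSubgroup.subset_closure (Or.inr h0)
      · have : a = ((2 : ZMod 4), (0 : Fin ℓ → ZMod 2)) + ((0 : ZMod 4), a.2) := by
          ext <;> simp [h2]
        rw [this]
        exact AddSubgroup.add_mem _ (AddSubgroup.subset_closure (Or.inl rfl))
          (AddSubgroup.subset_closure (Or.inr rfl))
    have hneg2 : ∀ t : ZMod 2, -t = t := by decide
    rcases (show ∀ t : ZMod 2, t = 0 ∨ t = 1 by decide) (a.2 0) with h0 | h1
    · right
      refine Prod.ext ?_ ?_
      · simp [h0]
      · simp only [Prod.snd_neg]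
        funext i; exact (hneg2 _).symm
    · left
      refine Prod.ext ?_ rfl
      simp only [AddEquiv.coe_mk, Equiv.coe_fn_mk, h1]
      rcases hodd with h | h <;> rw [h] <;> decide
end

section
/- Let A = ⟨x₁⟩ × ⟨x₂⟩ × ⟨y₁⟩ × ⋯ × ⟨y_ℓ⟩ with x₁, x₂ of order 4 and each yᵢ of order 2 (ℓ ≥ 0), and let B = ⟨x₁², x₂, y₁, …, y_ℓ⟩. Then there exists a non-identity automorphism α of A, distinct from inversion, such that every element a of A \ B satisfies a^α = a or a^α = a⁻¹. -/
/-- Let `A = ⟨x₁⟩ × ⟨x₂⟩ × ⟨y₁⟩ × ⋯ × ⟨y_ℓ⟩` with `x₁, x₂` of order 4 and each `yᵢ` of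
order 2 (`ℓ ≥ 0`), and let `B = ⟨x₁², x₂, y₁, …, y_ℓ⟩`. Then there exists a non-identity
automorphism `α` of `A`, distinct from inversion, such that every `a ∈ A \ B` satisfies
`a^α = a` or `a^α = a⁻¹` (written additively). -/
theorem stmt_11 (ℓ : ℕ)
    (B : AddSubgroup (ZMod 4 × ZMod 4 × (Fin ℓ → ZMod 2)))
    (hB : B = AddSubgroup.closure
      ({((2 : ZMod 4), (0 : ZMod 4), (0 : Fin ℓ → ZMod 2))} ∪ {a | a.1 = 0})) :
    ∃ α : (ZMod 4 × ZMod 4 × (Fin ℓ → ZMod 2)) ≃+ (ZMod 4 × ZMod 4 × (Fin ℓ → ZMod 2)),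
      (∃ a, α a ≠ a) ∧ (∃ a, α a ≠ -a) ∧
      ∀ a, a ∉ B → (α a = a ∨ α a = -a) := by
  classical
  refine ⟨{ toFun := fun a => (a.1 + 2 * a.2.1, -a.2.1, a.2.2),
            invFun := fun a => (a.1 + 2 * a.2.1, -a.2.1, a.2.2),
            left_inv := ?_, right_inv := ?_, map_add' := ?_ }, ?_, ?_, ?_⟩
  · intro a
    refine Prod.ext ?_ (Prod.ext ?_ rfl) <;> simp <;> ring
  · intro a
    refine Prod.ext ?_ (Prod.ext ?_ rfl) <;> simp <;> ring
  · intro a b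
    refine Prod.ext ?_ (Prod.ext ?_ rfl) <;> simp <;> ring
  · refine ⟨(0, 1, 0), fun h => ?_⟩
    have h1 := congrArg Prod.fst h
    simp at h1
    exact absurd h1 (by decide)
  · refine ⟨(1, 0, 0), fun h => ?_⟩
    have h1 := congrArg Prod.fst h
    simp at h1
    exact absurd h1 (by decide)
  · intro a ha
    have h2 : 2 * a.1 = 2 := by
      by_contra h
      have h0 : 2 * a.1 = 0 := by
        have : ∀ t : ZMod 4, 2 * t = 0 ∨ 2 * t = 2 := by decide
        rcases this a.1 with h' | h'
        · exact h'
        · exact absurd h' h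
      apply ha
      have hcases : a.1 = 0 ∨ a.1 = 2 := by
        have : ∀ t : ZMod 4, 2 * t = 0 → t = 0 ∨ t = 2 := by decide
        exact this a.1 h0
      rw [hB]
      rcases hcases with h' | h'
      · exact AddSubgroup.subset_closure (Or.inr h')
      · have : a = ((2 : ZMod 4), (0 : ZMod 4), (0 : Fin ℓ → ZMod 2))
            + (0, a.2.1, a.2.2) := by
          refine Prod.ext ?_ (Prod.ext ?_ ?_) <;> simp [h']
        rw [this]
        exact add_mem (AddSubgroup.subset_closure (Or.inl rfl))
          (AddSubgroup.subset_closure (Or.inr rfl))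
    have h22 : ∀ t : ZMod 2, -t = t := by decide
    rcases (show 2 * a.2.1 = 0 ∨ 2 * a.2.1 = 2 from by
        have : ∀ t : ZMod 4, 2 * t = 0 ∨ 2 * t = 2 := by decide
        exact this a.2.1) with h' | h'
    · left
      refine Prod.ext ?_ (Prod.ext ?_ rfl)
      · show a.1 + 2 * a.2.1 = a.1; rw [h']; ring
      · show -a.2.1 = a.2.1
        have : ∀ t : ZMod 4, 2 * t = 0 → -t = t := by decide
        exact this _ h'
    · right
      refine Prod.ext ?_ (Prod.ext ?_ ?_)
      · show a.1 + 2 * a.2.1 = -a.1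
        rw [h']
        have : ∀ s : ZMod 4, 2 * s = 2 → s + 2 = -s := by decide
        exact this _ h2
      · rfl
      · show a.2.2 = -a.2.2
        funext i
        exact (h22 _).symm
end
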